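/- For every integer n ≥ 7, the sum b_0 + b_2 + b_4 + ... + b_{2(n-2)} strictly exceeds b_{2n}, where b_{2k} denotes the number of partitions of 2k all of whose parts are even (with b_0 = 1 counting the empty partition); that is, Σ_{i=0}^{n-2} b_{2i} > b_{2n}. -/
import Mathlib


/-- `b k` is the number of partitions of `2 * k` in which every part is even. -/
noncomputable def b (k : ℕ) : ℕ :=
  Set.ncard {p : (2 * k).Partition | ∀ i ∈ p.parts, Even i}

open Multiset

lemma msup_mem {s : Multiset ℕ} (hs : s ≠ 0) : s.sup ∈ s := by
  induction s using Multiset.induction_on with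
  | empty => simp at hs
  | cons a t ih =>
    rcases eq_or_ne t 0 with rfl | ht
    · simp
    · rw [Multiset.sup_cons]
      rcases le_total a t.sup with h | h
      · rw [sup_eq_right.mpr h]; exact Multiset.mem_cons_of_mem (ih ht)
      · rw [sup_eq_left.mpr h]; exact Multiset.mem_cons_self a t

lemma partition_heq_parts {a c : ℕ} (h : a = c) {q : a.Partition} {s : c.Partition}
    (hh : HEq q s) : q.parts = s.parts := by subst h; rw [eq_of_heq hh]

noncomputable def doubleEquiv (k : ℕ) :
    k.Partition ≃ {p : (2 * k).Partition | ∀ i ∈ p.parts, Even i} where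
  toFun p := ⟨⟨p.parts.map (fun x => 2 * x), by
      intro i hi
      obtain ⟨a, ha, rfl⟩ := Multiset.mem_map.mp hi
      have := p.parts_pos ha; omega, by
      rw [show (fun x => 2 * x) = (fun x => 2 * id x) from rfl,
        Multiset.sum_map_mul_left, Multiset.map_id, p.parts_sum]⟩, by
      intro i hi
      obtain ⟨a, ha, rfl⟩ := Multiset.mem_map.mp hi
      exact ⟨a, two_mul a⟩⟩
  invFun q := ⟨q.1.parts.map (fun x => x / 2), by
      intro i hi
      obtain ⟨a, ha, rfl⟩ := Multiset.mem_map.mp hi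
      have h1 := q.1.parts_pos ha
      have h2 := q.2 a ha
      obtain ⟨c, rfl⟩ := h2
      omega, by
      have hc : q.1.parts.map (fun x => 2 * (x / 2)) = q.1.parts.map id := by
        apply Multiset.map_congr rfl
        intro x hx
        obtain ⟨c, rfl⟩ := q.2 x hx
        simp; omega
      have : (q.1.parts.map (fun x => 2 * ((fun y => y / 2) x))).sum = 2 * k := by
        rw [show (fun x => 2 * ((fun y => y / 2) x)) = (fun x => 2 * (x/2)) from rfl, hc,
          Multiset.map_id, q.1.parts_sum]
      rw [Multiset.sum_map_mul_left] at this
      omega⟩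
  left_inv p := by
    apply Nat.Partition.ext
    simp only [Multiset.map_map, Function.comp]
    rw [show (fun x => 2 * x / 2) = id by funext x; simp [Nat.mul_div_cancel_left x two_pos]]
    exact Multiset.map_id _
  right_inv q := by
    apply Subtype.ext
    apply Nat.Partition.ext
    simp only [Multiset.map_map, Function.comp]
    have : q.1.parts.map (fun x => 2 * (x / 2)) = q.1.parts.map id := by
      apply Multiset.map_congr rfl
      intro x hx
      obtain ⟨c, rfl⟩ := q.2 x hx
      simp; omega
    rw [this, Multiset.map_id]

lemma b_eq (k : ℕ) : b k = Fintype.card (k.Partition) := by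
  rw [b, ← Nat.card_coe_set_eq, ← Nat.card_congr (doubleEquiv k), Nat.card_eq_fintype_card]

section facts
variable {n : ℕ} (hn : 7 ≤ n) (p : n.Partition)

lemma parts_ne_zero (hn : 7 ≤ n) (p : n.Partition) : p.parts ≠ 0 := by
  intro h
  have := p.parts_sum
  rw [h] at this
  simp at this
  omega

lemma sup_mem_parts (hn : 7 ≤ n) (p : n.Partition) : p.parts.sup ∈ p.parts :=
  msup_mem (parts_ne_zero hn p)

lemma sup_le_n (hn : 7 ≤ n) (p : n.Partition) : p.parts.sup ≤ n := by
  have := Multiset.le_sum_of_mem (sup_mem_parts hn p)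
  rwa [p.parts_sum] at this

lemma two_le_sup (hn : 7 ≤ n) (p : n.Partition) (h1 : p.parts ≠ Multiset.replicate n 1) :
    2 ≤ p.parts.sup := by
  by_contra h
  apply h1
  rw [Multiset.eq_replicate]
  have hall : ∀ x ∈ p.parts, x = 1 := by
    intro x hx
    have h2 := p.parts_pos hx
    have h3 := Multiset.le_sup hx
    omega
  have hrep : p.parts = Multiset.replicate (Multiset.card p.parts) 1 :=
    Multiset.eq_replicate_card.2 hall
  have h6 := congrArg Multiset.sum hrep
  rw [p.parts_sum, Multiset.sum_replicate, smul_eq_mul, mul_one] at h6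
  exact ⟨h6.symm, hall⟩

lemma erase_sum (hn : 7 ≤ n) (p : n.Partition) :
    (p.parts.erase p.parts.sup).sum = n - p.parts.sup := by
  have h := Multiset.cons_erase (sup_mem_parts hn p)
  have h2 : (p.parts.sup ::ₘ p.parts.erase p.parts.sup).sum = n := by rw [h, p.parts_sum]
  rw [Multiset.sum_cons] at h2
  omega

lemma one_le_erase_sum (hn : 7 ≤ n) (p : n.Partition) (h2 : p.parts ≠ {n}) :
    1 ≤ n - p.parts.sup := by
  rw [← erase_sum hn p]
  rcases eq_or_ne (p.parts.erase p.parts.sup) 0 with he | he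
  · exfalso
    apply h2
    have h := Multiset.cons_erase (sup_mem_parts hn p)
    rw [he] at h
    have hs : p.parts.sum = n := p.parts_sum
    rw [← h] at hs ⊢
    simp at hs
    simp [hs]
  · obtain ⟨x, hx⟩ := Multiset.exists_mem_of_ne_zero he
    have := p.parts_pos (Multiset.mem_of_mem_erase hx)
    calc 1 ≤ x := this
    _ ≤ _ := Multiset.le_sum_of_mem hx

end facts

noncomputable def fmap (n : ℕ) (hn : 7 ≤ n) (p : n.Partition) :
    Σ i : Fin (n - 1), Nat.Partition (i : ℕ) :=
  if h1 : p.parts = Multiset.replicate n 1 then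
    ⟨⟨n - 2, by omega⟩, Nat.Partition.indiscrete (n - 2)⟩
  else if h2 : p.parts = {n} then
    ⟨⟨n - 2, by omega⟩, ⟨{n - 3, 1}, by
      intro i hi
      rcases Multiset.mem_cons.mp hi with rfl | hi
      · omega
      · simp at hi; omega, by simp; omega⟩⟩
  else
    ⟨⟨n - p.parts.sup, by
        have := two_le_sup hn p h1
        have := sup_le_n hn p
        have := one_le_erase_sum hn p h2
        omega⟩,
      ⟨p.parts.erase p.parts.sup,
        fun hi => p.parts_pos (Multiset.mem_of_mem_erase hi),
        erase_sum hn p⟩⟩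

lemma sigma_parts_eq {n : ℕ} {i j : Fin (n-1)} {a : Nat.Partition (i:ℕ)} {c : Nat.Partition (j:ℕ)}
    (h : (⟨i, a⟩ : Σ i : Fin (n-1), Nat.Partition (i:ℕ)) = ⟨j, c⟩) :
    (i:ℕ) = (j:ℕ) ∧ a.parts = c.parts := by
  obtain ⟨h1, h2⟩ := Sigma.mk.inj_iff.mp h
  have hv : (i:ℕ) = (j:ℕ) := congrArg Fin.val h1
  exact ⟨hv, partition_heq_parts hv h2⟩

lemma fmap_inj (n : ℕ) (hn : 7 ≤ n) : Function.Injective (fmap n hn) := by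
  intro p q h
  unfold fmap at h
  split_ifs at h with hp1 hq1 hq2 hp2 hq1' hq2' hq1'' hq2''
  · exact Nat.Partition.ext (hp1.trans hq1.symm)
  · -- p replicate, q = {n}
    obtain ⟨hidx, hparts⟩ := sigma_parts_eq h
    dsimp only at hidx hparts
    rw [Nat.Partition.indiscrete_parts (show n - 2 ≠ 0 by omega)] at hparts
    have := congrArg Multiset.card hparts
    simp at this
  · -- p replicate, q generic
    obtain ⟨hidx, hparts⟩ := sigma_parts_eq h
    dsimp only at hidx hparts
    rw [Nat.Partition.indiscrete_parts (show n - 2 ≠ 0 by omega)] at hparts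
    have hLq := sup_le_n hn q
    have hm : n - 2 ∈ q.parts.erase q.parts.sup := by
      rw [← hparts]; exact Multiset.mem_singleton_self _
    have := Multiset.le_sup (Multiset.mem_of_mem_erase hm)
    omega
  · -- p = {n}, q replicate
    obtain ⟨hidx, hparts⟩ := sigma_parts_eq h
    dsimp only at hidx hparts
    rw [Nat.Partition.indiscrete_parts (show n - 2 ≠ 0 by omega)] at hparts
    have := congrArg Multiset.card hparts
    simp at this
  · exact Nat.Partition.ext (hp2.trans hq2'.symm)
  · -- p = {n}, q generic
    obtain ⟨hidx, hparts⟩ := sigma_parts_eq h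
    dsimp only at hidx hparts
    have hLq := sup_le_n hn q
    have hm : n - 3 ∈ q.parts.erase q.parts.sup := by
      rw [← hparts]; exact Multiset.mem_cons_self _ _
    have := Multiset.le_sup (Multiset.mem_of_mem_erase hm)
    omega
  · -- p generic, q replicate
    obtain ⟨hidx, hparts⟩ := sigma_parts_eq h
    dsimp only at hidx hparts
    rw [Nat.Partition.indiscrete_parts (show n - 2 ≠ 0 by omega)] at hparts
    have hLp := sup_le_n hn p
    have hm : n - 2 ∈ p.parts.erase p.parts.sup := by
      rw [hparts]; exact Multiset.mem_singleton_self _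
    have := Multiset.le_sup (Multiset.mem_of_mem_erase hm)
    omega
  · -- p generic, q = {n}
    obtain ⟨hidx, hparts⟩ := sigma_parts_eq h
    dsimp only at hidx hparts
    have hLp := sup_le_n hn p
    have hm : n - 3 ∈ p.parts.erase p.parts.sup := by
      rw [hparts]; exact Multiset.mem_cons_self _ _
    have := Multiset.le_sup (Multiset.mem_of_mem_erase hm)
    omega
  · -- both generic
    obtain ⟨hidx, hparts⟩ := sigma_parts_eq h
    dsimp only at hidx hparts
    have hLp := sup_le_n hn p
    have hLq := sup_le_n hn q
    have h2p := two_le_sup hn p hp1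
    have h2q := two_le_sup hn q hq1''
    have hL : p.parts.sup = q.parts.sup := by omega
    apply Nat.Partition.ext
    have hcp := Multiset.cons_erase (sup_mem_parts hn p)
    have hcq := Multiset.cons_erase (sup_mem_parts hn q)
    rw [← hcp, ← hcq, hparts, hL]

lemma fmap_notMem (n : ℕ) (hn : 7 ≤ n) :
    (⟨⟨n - 2, by omega⟩, ⟨{n - 4, 2}, by
        intro i hi
        rcases Multiset.mem_cons.mp hi with rfl | hi
        · omega
        · simp at hi; omega, by simp; omega⟩⟩ :
      Σ i : Fin (n-1), Nat.Partition (i:ℕ)) ∉ Set.range (fmap n hn) := by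
  rintro ⟨p, hp⟩
  unfold fmap at hp
  split_ifs at hp with h1 h2
  · obtain ⟨hidx, hparts⟩ := sigma_parts_eq hp
    dsimp only at hidx hparts
    rw [Nat.Partition.indiscrete_parts (show n - 2 ≠ 0 by omega)] at hparts
    have := congrArg Multiset.card hparts
    simp at this
  · obtain ⟨hidx, hparts⟩ := sigma_parts_eq hp
    dsimp only at hidx hparts
    have h2m : (2:ℕ) ∈ ({n-3,1} : Multiset ℕ) := by rw [hparts]; simp
    simp [Multiset.mem_cons] at h2m
    omega
  · obtain ⟨hidx, hparts⟩ := sigma_parts_eq hp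
    dsimp only at hidx hparts
    have hLp := sup_le_n hn p
    have hm : n - 4 ∈ p.parts.erase p.parts.sup := by
      rw [hparts]; exact Multiset.mem_cons_self _ _
    have := Multiset.le_sup (Multiset.mem_of_mem_erase hm)
    omega

theorem key_lt (n : ℕ) (hn : 7 ≤ n) :
    Fintype.card (n.Partition) < ∑ i ∈ Finset.range (n-1), Fintype.card (Nat.Partition i) := by
  have h := Fintype.card_lt_of_injective_of_notMem (fmap n hn) (fmap_inj n hn) (fmap_notMem n hn)
  rwa [Fintype.card_sigma, Fin.sum_univ_eq_sum_range (fun i => Fintype.card (Nat.Partition i))] at h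


theorem stmt_9 : ∀ n : ℕ, 7 ≤ n → (∑ i ∈ Finset.range (n - 1), b i) > b n := by
  intro n hn
  simp only [b_eq, gt_iff_lt]
  exact key_lt n hn
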